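/- Let $Q_1,Q_2,Q_3$ be a nonsingular system of three quadratic forms in $n$ variables over an algebraically closed field $k$ of characteristic zero, defining the variety $\mathcal{R}: Q_1=Q_2=Q_3=0$ in $\mathbb{P}^{n-1}$. Assume $\mathcal{Q}_3: Q_3=0$ is a nonsingular quadric. If $[x]\in\mathcal{R}$ and $Q=t_1Q_1+t_2Q_2$ is any nontrivial linear combination, then $Qx\neq 0$, and the hyperplane $H=\{[y]: y^TQx=0\}$ intersects $\mathcal{Q}_3$ in a quadric of rank at least $n-2$ in $\mathbb{P}^{n-2}$ for which $[x]$ is a smooth point. -/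

import Mathlib

open Matrix

/-- The linear functional `y ↦ y ⬝ᵥ w` on `Fin n → k`; its kernel is the hyperplane
with normal vector `w`. -/
noncomputable def dotLin {k : Type*} [CommRing k] {n : ℕ} (w : Fin n → k) :
    (Fin n → k) →ₗ[k] k where
  toFun y := y ⬝ᵥ w
  map_add' a b := add_dotProduct a b w
  map_smul' c a := smul_dotProduct c a w

/-- For a nonsingular system `Q₁, Q₂, Q₃` with `𝒬₃` a nonsingular quadric, a point
`[x] ∈ ℛ` and a nontrivial combination `Q = t₁Q₁ + t₂Q₂`: the gradient `Q *ᵥ x` is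
nonzero; `[x]` is a smooth point of the quadric `𝒬₃ ∩ H` cut out on the hyperplane
`H = {[y] : yᵀQx = 0}` (i.e. `A₃x` and `Qx` are linearly independent); and the rank of
`Q₃` restricted to `H` is at least `n - 2`, i.e. the radical
`{y ∈ H : A₃y ∈ span(Qx)}` of the restricted form has dimension at most `1`. -/
theorem smooth_hyperplane_section_of_nonsingular_triple
    {k : Type*} [Field k] [IsAlgClosed k] [CharZero k] {n : ℕ}
    (A₁ A₂ A₃ : Matrix (Fin n) (Fin n) k)
    (hA₁ : A₁.IsSymm) (hA₂ : A₂.IsSymm) (hA₃ : A₃.IsSymm)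
    (hns : ∀ y : Fin n → k, y ≠ 0 → y ⬝ᵥ (A₁ *ᵥ y) = 0 → y ⬝ᵥ (A₂ *ᵥ y) = 0 →
      y ⬝ᵥ (A₃ *ᵥ y) = 0 → LinearIndependent k ![A₁ *ᵥ y, A₂ *ᵥ y, A₃ *ᵥ y])
    (hdet : IsUnit A₃.det)
    (x : Fin n → k) (hx : x ≠ 0)
    (hx₁ : x ⬝ᵥ (A₁ *ᵥ x) = 0) (hx₂ : x ⬝ᵥ (A₂ *ᵥ x) = 0) (hx₃ : x ⬝ᵥ (A₃ *ᵥ x) = 0)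
    (t₁ t₂ : k) (ht : (t₁, t₂) ≠ (0, 0))
    (Q : Matrix (Fin n) (Fin n) k) (hQ : Q = t₁ • A₁ + t₂ • A₂) :
    Q *ᵥ x ≠ 0 ∧
    LinearIndependent k ![A₃ *ᵥ x, Q *ᵥ x] ∧
    Module.finrank k
      ↥(LinearMap.ker (dotLin (Q *ᵥ x)) ⊓
        Submodule.comap A₃.mulVecLin (Submodule.span k {Q *ᵥ x})) ≤ 1 := by

  subst hQ
  have hli := hns x hx hx₁ hx₂ hx₃
  rw [Fintype.linearIndependent_iff] at hli
  have hQx : (t₁ • A₁ + t₂ • A₂) *ᵥ x = t₁ • (A₁ *ᵥ x) + t₂ • (A₂ *ᵥ x) := by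
    rw [Matrix.add_mulVec, Matrix.smul_mulVec, Matrix.smul_mulVec]
  have hpair : LinearIndependent k ![A₃ *ᵥ x, (t₁ • A₁ + t₂ • A₂) *ᵥ x] := by
    rw [LinearIndependent.pair_iff]
    intro s t hst
    have key := hli ![t * t₁, t * t₂, s] (by
      rw [Fin.sum_univ_three]
      simp only [Matrix.cons_val_zero, Matrix.cons_val_one, Matrix.head_cons,
        Matrix.cons_val_two, Matrix.tail_cons]
      rw [hQx] at hst
      rw [← hst]
      module)
    have ht1 : t * t₁ = 0 := key 0
    have ht2 : t * t₂ = 0 := key 1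
    have hs : s = 0 := key 2
    refine ⟨hs, ?_⟩
    by_contra hne
    have h1 : t₁ = 0 := (mul_eq_zero.mp ht1).resolve_left hne
    have h2 : t₂ = 0 := (mul_eq_zero.mp ht2).resolve_left hne
    exact ht (by rw [h1, h2])
  have hw : (t₁ • A₁ + t₂ • A₂) *ᵥ x ≠ 0 := hpair.ne_zero 1
  refine ⟨hw, hpair, ?_⟩
  set w := (t₁ • A₁ + t₂ • A₂) *ᵥ x with hwdef
  have hle : LinearMap.ker (dotLin w) ⊓
      Submodule.comap A₃.mulVecLin (Submodule.span k {w}) ≤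
      Submodule.map (A₃⁻¹).mulVecLin (Submodule.span k {w}) := by
    rintro y ⟨-, hy⟩
    exact ⟨A₃ *ᵥ y, hy, by
      simp [Matrix.mulVecLin_apply, Matrix.mulVec_mulVec,
        Matrix.nonsing_inv_mul A₃ hdet]⟩
  calc Module.finrank k ↥(LinearMap.ker (dotLin w) ⊓
        Submodule.comap A₃.mulVecLin (Submodule.span k {w}))
      ≤ Module.finrank k ↥(Submodule.map (A₃⁻¹).mulVecLin (Submodule.span k {w})) :=
        Submodule.finrank_mono hle
    _ ≤ Module.finrank k ↥(Submodule.span k {w}) := Submodule.finrank_map_le _ _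
    _ = 1 := finrank_span_singleton hw
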